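/- For the generating function G_n(q,t) = ∑_{σ∈R_n^B} q^{des(σ)} t^{maj(σ)}, one has G_n(q,t) = q^{n-1} t^{C(n,2)} G_n(q^{-1}, t^{-1}). -/

import Mathlib

/-- `w` is a signed permutation of length n: a list of nonzero integers whose
absolute values form a permutation of {1,...,n}. -/
def IsSignedPerm (n : ℕ) (w : List ℤ) : Prop :=
  w.length = n ∧ (w.map Int.natAbs).Perm (List.range' 1 n)

/-- Position `i` is the bottom of a modular run (mrun) of `w`: either `i = 0`
or the previous entry is larger in absolute value. -/
def IsBottom (w : List ℤ) (i : ℕ) : Prop :=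
  i = 0 ∨ (w.getD i 0).natAbs < (w.getD (i - 1) 0).natAbs

instance (w : List ℤ) (i : ℕ) : Decidable (IsBottom w i) := by
  unfold IsBottom; infer_instance

/-- `w ∈ R_n^B`: `w` is a signed permutation of length n which is the flattening of a
type B merging-free partition without zero block; equivalently the bottoms of its
mruns are positive and increasing, and the absolute value of the top of each mrun
exceeds the bottom of the following mrun. -/
def MemR (n : ℕ) (w : List ℤ) : Prop :=
  IsSignedPerm n w ∧
  (∀ i, i < n → IsBottom w i → 0 < w.getD i 0) ∧
  (∀ i j, i < j → j < n → IsBottom w i → IsBottom w j → w.getD i 0 < w.getD j 0) ∧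
  (∀ j, 0 < j → j < n → IsBottom w j → w.getD j 0 < ((w.getD (j - 1) 0).natAbs : ℤ))

/-- The number of descents of `w`: positions i with `w_i > w_{i+1}`. -/
def des (w : List ℤ) : ℕ :=
  ((List.range (w.length - 1)).filter
    (fun i => decide (w.getD (i + 1) 0 < w.getD i 0))).length

/-- The major index of `w`: sum of the (1-based) descent positions. -/
def maj (w : List ℤ) : ℕ :=
  ∑ i ∈ Finset.range (w.length - 1),
    if w.getD (i + 1) 0 < w.getD i 0 then i + 1 else 0

/-- The number of modular runs (mruns) of `w`. -/
def numRuns (w : List ℤ) : ℕ :=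
  ((List.range w.length).filter (fun i => decide (IsBottom w i))).length

/-- `d n k`: the number of permutations in `R_n^B` having `k` descents. -/
noncomputable def dcount (n k : ℕ) : ℕ :=
  Nat.card {w : List ℤ // MemR n w ∧ des w = k}

/-- `τ` lies in the valley-hopping orbit of `σ`: same absolute values everywhere,
and the same (positive) entries at the bottoms of the mruns of `σ`. -/
def InOrb (σ τ : List ℤ) : Prop :=
  τ.length = σ.length ∧ ∀ i, i < σ.length →
    (τ.getD i 0).natAbs = (σ.getD i 0).natAbs ∧
    (IsBottom σ i → τ.getD i 0 = σ.getD i 0)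

/-- The joint descent–major index generating function
`G_n(q,t) = ∑_{σ ∈ R_n^B} q^{des σ} t^{maj σ}`. -/
noncomputable def G (n : ℕ) (q t : ℝ) : ℝ :=
  ∑ k ∈ Finset.range n, ∑ m ∈ Finset.range (Nat.choose n 2 + 1),
    (Nat.card {w : List ℤ // MemR n w ∧ des w = k ∧ maj w = m} : ℝ) * q ^ k * t ^ m


namespace GSym

/-- The complement map: negate every non-bottom entry. -/
def phi (w : List ℤ) : List ℤ :=
  (List.range w.length).map fun i => if IsBottom w i then w.getD i 0 else -(w.getD i 0)

lemma phi_length (w : List ℤ) : (phi w).length = w.length := by simp [phi]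

lemma phi_getD (w : List ℤ) {i : ℕ} (h : i < w.length) :
    (phi w).getD i 0 = if IsBottom w i then w.getD i 0 else -(w.getD i 0) := by
  rw [List.getD_eq_getElem _ _ (by simpa [phi_length] using h)]
  simp [phi]

lemma phi_natAbs (w : List ℤ) (i : ℕ) :
    ((phi w).getD i 0).natAbs = (w.getD i 0).natAbs := by
  rcases lt_or_ge i w.length with h | h
  · rw [phi_getD w h]; split <;> simp
  · rw [List.getD_eq_default _ _ (by simpa [phi_length] using h),
      List.getD_eq_default _ _ h]

lemma phi_bottom (w : List ℤ) (i : ℕ) : IsBottom (phi w) i ↔ IsBottom w i := by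
  unfold IsBottom
  rw [phi_natAbs, phi_natAbs]

lemma phi_phi (w : List ℤ) : phi (phi w) = w := by
  apply List.ext_getElem (by simp [phi_length])
  intro i h1 h2
  have h2' : i < w.length := h2
  have h1' : i < (phi w).length := by simpa [phi_length] using h2'
  rw [← List.getD_eq_getElem (phi (phi w)) 0 h1, ← List.getD_eq_getElem w 0 h2]
  rw [phi_getD _ h1', phi_getD _ h2']
  by_cases hb : IsBottom w i <;> simp [hb, phi_bottom]

lemma map_natAbs_phi (w : List ℤ) :
    (phi w).map Int.natAbs = w.map Int.natAbs := by
  apply List.ext_getElem (by simp [phi_length])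
  intro i h1 h2
  have h2' : i < w.length := by simpa using h2
  have h1' : i < (phi w).length := by simpa [phi_length] using h2'
  simp only [List.getElem_map]
  rw [← List.getD_eq_getElem (phi w) 0 h1', ← List.getD_eq_getElem w 0 h2']
  exact phi_natAbs w i

lemma memR_phi {n : ℕ} {w : List ℤ} (hw : MemR n w) : MemR n (phi w) := by
  obtain ⟨⟨hlen, hperm⟩, h2, h3, h4⟩ := hw
  refine ⟨⟨by rw [phi_length, hlen], by rw [map_natAbs_phi]; exact hperm⟩, ?_, ?_, ?_⟩
  · intro i hi hb
    rw [phi_bottom] at hb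
    rw [phi_getD w (by omega), if_pos hb]
    exact h2 i hi hb
  · intro i j hij hj hbi hbj
    rw [phi_bottom] at hbi hbj
    rw [phi_getD w (by omega), if_pos hbi, phi_getD w (by omega), if_pos hbj]
    exact h3 i j hij hj hbi hbj
  · intro j hj0 hj hb
    rw [phi_bottom] at hb
    rw [phi_getD w (by omega), if_pos hb, phi_natAbs]
    exact h4 j hj0 hj hb

lemma natAbs_pos {n : ℕ} {w : List ℤ} (hw : MemR n w) {i : ℕ} (hi : i < n) :
    1 ≤ (w.getD i 0).natAbs := by
  obtain ⟨⟨hlen, hperm⟩, -, -, -⟩ := hw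
  have hi' : i < w.length := by omega
  have hmem : (w.getD i 0).natAbs ∈ w.map Int.natAbs := by
    rw [List.getD_eq_getElem w 0 hi']
    exact List.mem_map_of_mem (List.getElem_mem hi')
  have := hperm.mem_iff.mp hmem
  rw [List.mem_range'] at this
  omega

lemma natAbs_ne {n : ℕ} {w : List ℤ} (hw : MemR n w) {i j : ℕ} (hi : i < n) (hj : j < n)
    (hij : i ≠ j) : (w.getD i 0).natAbs ≠ (w.getD j 0).natAbs := by
  obtain ⟨⟨hlen, hperm⟩, -, -, -⟩ := hw
  have hnd : (w.map Int.natAbs).Nodup := hperm.nodup_iff.mpr (List.nodup_range' (s := 1) (n := n))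
  have hi' : i < w.length := by omega
  have hj' : j < w.length := by omega
  rw [List.getD_eq_getElem w 0 hi', List.getD_eq_getElem w 0 hj']
  intro he
  apply hij
  have hi'' : i < (w.map Int.natAbs).length := by simpa using hi'
  have hj'' : j < (w.map Int.natAbs).length := by simpa using hj'
  have : (w.map Int.natAbs)[i] = (w.map Int.natAbs)[j] := by
    simpa using he
  exact hnd.getElem_inj_iff.mp this

/-- The key lemma: the complement map flips every descent position. -/
lemma flip {n : ℕ} {w : List ℤ} (hw : MemR n w) {i : ℕ} (hi : i + 1 < n) :
    ((phi w).getD (i + 1) 0 < (phi w).getD i 0 ↔ ¬ (w.getD (i + 1) 0 < w.getD i 0)) := by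
  have hlen : w.length = n := hw.1.1
  have hi' : i < w.length := by omega
  have hi1 : i + 1 < w.length := by omega
  have hne : (w.getD i 0).natAbs ≠ (w.getD (i + 1) 0).natAbs :=
    natAbs_ne hw (by omega) hi (by omega)
  have ha1 : 1 ≤ (w.getD i 0).natAbs := natAbs_pos hw (by omega)
  have hb1 : 1 ≤ (w.getD (i + 1) 0).natAbs := natAbs_pos hw hi
  by_cases hb : IsBottom w (i + 1)
  · have hbpos : 0 < w.getD (i + 1) 0 := hw.2.1 _ hi hb
    have hblt : (w.getD (i + 1) 0).natAbs < (w.getD i 0).natAbs := by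
      rcases hb with hb | hb
      · omega
      · simpa using hb
    have hnotbi : ¬ IsBottom w i := by
      intro hbi
      have hlt := hw.2.2.1 i (i + 1) (by omega) hi hbi hb
      have hapos := hw.2.1 i (by omega) hbi
      omega
    rw [phi_getD w hi1, phi_getD w hi', if_pos hb, if_neg hnotbi]
    omega
  · have hab : (w.getD i 0).natAbs < (w.getD (i + 1) 0).natAbs := by
      unfold IsBottom at hb
      push_neg at hb
      have := hb.2
      simp only [Nat.add_sub_cancel] at this
      omega
    rw [phi_getD w hi1, if_neg hb, phi_getD w hi']
    by_cases hbi : IsBottom w i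
    · rw [if_pos hbi]; omega
    · rw [if_neg hbi]; omega

lemma length_filter_range (N : ℕ) (f : ℕ → Bool) :
    ((List.range N).filter f).length = ∑ i ∈ Finset.range N, if f i then 1 else 0 := by
  induction N with
  | zero => simp
  | succ N ih =>
    rw [List.range_succ, List.filter_append, List.length_append, ih, Finset.sum_range_succ]
    congr 1
    by_cases h : f N <;> simp [h]

lemma des_eq {n : ℕ} {w : List ℤ} (hw : MemR n w) :
    des w = ∑ i ∈ Finset.range (n - 1), if w.getD (i + 1) 0 < w.getD i 0 then 1 else 0 := by
  have hlen : w.length = n := hw.1.1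
  rw [des, hlen, length_filter_range]
  apply Finset.sum_congr rfl
  intro i _
  by_cases h : w.getD (i + 1) 0 < w.getD i 0 <;> simp [h]

lemma maj_eq {n : ℕ} {w : List ℤ} (hw : MemR n w) :
    maj w = ∑ i ∈ Finset.range (n - 1), if w.getD (i + 1) 0 < w.getD i 0 then i + 1 else 0 := by
  have hlen : w.length = n := hw.1.1
  rw [maj, hlen]

lemma des_add {n : ℕ} {w : List ℤ} (hn : 1 ≤ n) (hw : MemR n w) :
    des (phi w) + des w = n - 1 := by
  rw [des_eq (memR_phi hw), des_eq hw, ← Finset.sum_add_distrib]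
  rw [Finset.sum_congr rfl (g := fun _ => (1 : ℕ)) ?_]
  · simp [Finset.sum_const]
  · intro i hi
    rw [Finset.mem_range] at hi
    have hflip := flip hw (show i + 1 < n by omega)
    by_cases h : w.getD (i + 1) 0 < w.getD i 0
    · rw [if_pos h, if_neg (by rw [hflip]; exact fun hc => hc h)]
    · rw [if_neg h, if_pos (hflip.mpr h)]

lemma sum_range_succ_id (n : ℕ) (hn : 1 ≤ n) :
    ∑ i ∈ Finset.range (n - 1), (i + 1) = Nat.choose n 2 := by
  obtain ⟨m, rfl⟩ : ∃ m, n = m + 1 := ⟨n - 1, by omega⟩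
  clear hn
  have h2 : (∑ i ∈ Finset.range m, (i + 1)) * 2 = (m + 1) * m := by
    induction m with
    | zero => simp
    | succ k ih =>
      rw [Finset.sum_range_succ, add_mul, ih]
      ring
  have h3 : (m + 1).choose 2 = (m + 1) * m / 2 := Nat.choose_two_right (m + 1)
  simp only [Nat.add_sub_cancel]
  omega

lemma maj_add {n : ℕ} {w : List ℤ} (hn : 1 ≤ n) (hw : MemR n w) :
    maj (phi w) + maj w = Nat.choose n 2 := by
  rw [maj_eq (memR_phi hw), maj_eq hw, ← Finset.sum_add_distrib]
  rw [Finset.sum_congr rfl (g := fun i => i + 1) ?_]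
  · exact sum_range_succ_id n hn
  · intro i hi
    rw [Finset.mem_range] at hi
    have hflip := flip hw (show i + 1 < n by omega)
    by_cases h : w.getD (i + 1) 0 < w.getD i 0
    · rw [if_pos h, if_neg (by rw [hflip]; exact fun hc => hc h)]
      simp
    · rw [if_neg h, if_pos (hflip.mpr h)]

lemma card_eq (n k m : ℕ) (hn : 1 ≤ n) (hk : k < n) (hm : m < Nat.choose n 2 + 1) :
    Nat.card {w : List ℤ // MemR n w ∧ des w = k ∧ maj w = m} =
      Nat.card {w : List ℤ // MemR n w ∧ des w = n - 1 - k ∧ maj w = Nat.choose n 2 - m} := by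
  apply Nat.card_congr
  refine ⟨fun x => ⟨phi x.1, memR_phi x.2.1, ?_, ?_⟩,
    fun x => ⟨phi x.1, memR_phi x.2.1, ?_, ?_⟩, fun x => Subtype.ext (phi_phi x.1),
    fun x => Subtype.ext (phi_phi x.1)⟩
  · have := des_add hn x.2.1; have h2 := x.2.2.1; omega
  · have := maj_add hn x.2.1; have h2 := x.2.2.2; omega
  · have := des_add hn x.2.1; have h2 := x.2.2.1; omega
  · have := maj_add hn x.2.1; have h2 := x.2.2.2; omega

end GSym

/-- `G_n(q,t) = q^{n-1} t^{C(n,2)} G_n(q⁻¹, t⁻¹)`. -/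
theorem G_symmetry (n : ℕ) (hn : 1 ≤ n) (q t : ℝ) (hq : q ≠ 0) (ht : t ≠ 0) :
    G n q t = q ^ (n - 1) * t ^ (Nat.choose n 2) * G n q⁻¹ t⁻¹ := by
  classical
  have hC := Nat.choose n 2
  symm
  calc q ^ (n - 1) * t ^ (Nat.choose n 2) * G n q⁻¹ t⁻¹
      = ∑ k ∈ Finset.range n, ∑ m ∈ Finset.range (Nat.choose n 2 + 1),
          (Nat.card {w : List ℤ // MemR n w ∧ des w = k ∧ maj w = m} : ℝ) *
            q ^ (n - 1 - k) * t ^ (Nat.choose n 2 - m) := by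
        rw [G, Finset.mul_sum]
        apply Finset.sum_congr rfl
        intro k hk
        rw [Finset.mul_sum]
        apply Finset.sum_congr rfl
        intro m hm
        rw [Finset.mem_range] at hk hm
        have hq1 : q ^ (n - 1) * (q⁻¹) ^ k = q ^ (n - 1 - k) := by
          have : q ^ (n - 1) = q ^ (n - 1 - k) * q ^ k := by
            rw [← pow_add]; congr 1; omega
          rw [this, inv_pow, mul_assoc, mul_inv_cancel₀ (pow_ne_zero _ hq), mul_one]
        have ht1 : t ^ (Nat.choose n 2) * (t⁻¹) ^ m = t ^ (Nat.choose n 2 - m) := by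
          have : t ^ (Nat.choose n 2) = t ^ (Nat.choose n 2 - m) * t ^ m := by
            rw [← pow_add]; congr 1; omega
          rw [this, inv_pow, mul_assoc, mul_inv_cancel₀ (pow_ne_zero _ ht), mul_one]
        calc q ^ (n - 1) * t ^ (Nat.choose n 2) *
              ((Nat.card {w : List ℤ // MemR n w ∧ des w = k ∧ maj w = m} : ℝ) *
                (q⁻¹) ^ k * (t⁻¹) ^ m)
            = (Nat.card {w : List ℤ // MemR n w ∧ des w = k ∧ maj w = m} : ℝ) *
              (q ^ (n - 1) * (q⁻¹) ^ k) * (t ^ (Nat.choose n 2) * (t⁻¹) ^ m) := by ring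
          _ = _ := by rw [hq1, ht1]
    _ = ∑ k ∈ Finset.range n, ∑ m ∈ Finset.range (Nat.choose n 2 + 1),
          (Nat.card {w : List ℤ // MemR n w ∧ des w = n - 1 - k ∧
            maj w = Nat.choose n 2 - m} : ℝ) * q ^ k * t ^ m := by
        rw [← Finset.sum_range_reflect]
        apply Finset.sum_congr rfl
        intro k hk
        rw [Finset.mem_range] at hk
        rw [← Finset.sum_range_reflect]
        apply Finset.sum_congr rfl
        intro m hm
        rw [Finset.mem_range] at hm
        have e1 : n - 1 - (n - 1 - k) = k := by omega
        have e2 : Nat.choose n 2 + 1 - 1 - m = Nat.choose n 2 - m := by omega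
        have e3 : Nat.choose n 2 - (Nat.choose n 2 - m) = m := by omega
        rw [e2, e1, e3]
    _ = G n q t := by
        rw [G]
        apply Finset.sum_congr rfl
        intro k hk
        apply Finset.sum_congr rfl
        intro m hm
        rw [Finset.mem_range] at hk hm
        rw [← GSym.card_eq n k m hn hk hm]
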